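/- (Theorem on the sequential algorithm with smoothing.) Let K ⊆ ℝⁿ be a closed convex cone with dual cone K*, let ψ : ℝⁿ → ℝ be concave with ψ(0) = 0, and let ψ_S : ℝⁿ → ℝ be concave and differentiable with ψ_S(0) = 0 and gradient antitone on K: whenever u, v ∈ K and u − v ∈ K, ∇ψ_S(v) − ∇ψ_S(u) ∈ K*. For t ∈ {1,…,m} let F_t ⊆ ℝᵏ and A_t : ℝᵏ → ℝⁿ linear with A_t x ∈ K for all x ∈ F_t. Suppose c ∈ K satisfies c − A_t x ∈ K for all t and all x ∈ F_t, and let κ ∈ ℝ satisfy ⟨c, ∇ψ_S(0) − ∇ψ_S(u)⟩ ≤ κ·ψ(u) for all u ∈ K. Let ᾱ ∈ ℝ satisfy: for all u ∈ K and all w ∈ ℝⁿ, ⟨∇ψ_S(u), w⟩ − ψ(w) ≥ ψ_S(u) + (ᾱ − 1)·ψ(u). Set u₀ = 0 and u_t = ∑_{s=1}^t A_s x̂_s, and suppose x̂_t ∈ F_t satisfies ⟨x̂_t, A_tᵀ ∇ψ_S(u_{t−1})⟩ ≥ ⟨x, A_tᵀ ∇ψ_S(u_{t−1})⟩ for all x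 ∈ F_t. Then for every choice of x'_t ∈ F_t and every w ∈ ℝⁿ: (1 − ᾱ + κ)·ψ(u_m) ≥ ∑_{t=1}^m ⟨A_t x'_t, ∇ψ_S(u_m)⟩ − ⟨∇ψ_S(u_m), w⟩ + ψ(w). (This says P_seq ≥ D★/(1 − ᾱ_{ψ,ψ_S} + κ_{c,ψ,ψ_S}).) -/

import Mathlib

open RealInnerProductSpace

/-- The dual cone of a set `K`. -/
def dualCone {n : ℕ} (K : Set (EuclideanSpace ℝ (Fin n))) :
    Set (EuclideanSpace ℝ (Fin n)) :=
  {y | ∀ u ∈ K, 0 ≤ ⟪y, u⟫}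

lemma concave_grad_ineq {n : ℕ} {f : EuclideanSpace ℝ (Fin n) → ℝ}
    (hf : ConcaveOn ℝ Set.univ f) {u gu : EuclideanSpace ℝ (Fin n)}
    (hg : HasGradientAt f gu u) (v : EuclideanSpace ℝ (Fin n)) :
    f v ≤ f u + ⟪gu, v - u⟫ := by
  have hφ : ConcaveOn ℝ Set.univ (fun t : ℝ => f (u + t • (v - u))) := by
    have := hf.comp_affineMap
      (AffineMap.const ℝ ℝ u + (LinearMap.toAffineMap (LinearMap.toSpanSingleton ℝ _ (v - u))))
    simpa [Function.comp_def, add_comm] using this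
  have hline : HasDerivAt (fun t : ℝ => u + t • (v - u)) (v - u) 0 := by
    simpa using ((hasDerivAt_id (0 : ℝ)).smul_const (v - u)).const_add u
  have hFD : HasFDerivAt f (InnerProductSpace.toDual ℝ _ gu) (u + (0 : ℝ) • (v - u)) := by
    simpa using hg.hasFDerivAt
  have hd : HasDerivAt (fun t : ℝ => f (u + t • (v - u))) ⟪gu, v - u⟫ 0 := by
    have := hFD.comp_hasDerivAt 0 hline
    simp only [InnerProductSpace.toDual_apply_apply] at this; exact this
  have hs := hφ.slope_le_of_hasDerivAt (Set.mem_univ 0) (Set.mem_univ 1) zero_lt_one hd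
  rw [show slope (fun t : ℝ => f (u + t • (v - u))) 0 1 = f v - f u by
    simp [slope_def_field]] at hs
  linarith

/-- Sequential algorithm with smoothing `ψ_S` (gradient `g`):
`(1 − ᾱ + κ)·ψ(u_m)` dominates the dual objective of the original problem
evaluated at `∇ψ_S(u_m)`. -/
theorem stmt_16 {n k m : ℕ}
    (K : Set (EuclideanSpace ℝ (Fin n)))
    (hKclosed : IsClosed K) (hKconvex : Convex ℝ K)
    (hKcone : ∀ c : ℝ, 0 < c → ∀ u ∈ K, c • u ∈ K)
    (ψ ψS : EuclideanSpace ℝ (Fin n) → ℝ)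
    (hψ : ConcaveOn ℝ Set.univ ψ) (hψ0 : ψ 0 = 0)
    (hψS : ConcaveOn ℝ Set.univ ψS) (hψS0 : ψS 0 = 0)
    (g : EuclideanSpace ℝ (Fin n) → EuclideanSpace ℝ (Fin n))
    (hg : ∀ u, HasGradientAt ψS (g u) u)
    (hantitone : ∀ u ∈ K, ∀ v ∈ K, u - v ∈ K → g v - g u ∈ dualCone K)
    (F : ℕ → Set (EuclideanSpace ℝ (Fin k)))
    (A : ℕ → EuclideanSpace ℝ (Fin k) →ₗ[ℝ] EuclideanSpace ℝ (Fin n))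
    (hA : ∀ t < m, ∀ x ∈ F t, A t x ∈ K)
    (c : EuclideanSpace ℝ (Fin n)) (hc : c ∈ K)
    (hcb : ∀ t < m, ∀ x ∈ F t, c - A t x ∈ K)
    (κ : ℝ) (hκ : ∀ u ∈ K, ⟪c, g 0 - g u⟫ ≤ κ * ψ u)
    (α : ℝ)
    (hα : ∀ u ∈ K, ∀ w : EuclideanSpace ℝ (Fin n),
      ψS u + (α - 1) * ψ u ≤ ⟪g u, w⟫ - ψ w)
    (xt : ℕ → EuclideanSpace ℝ (Fin k))
    (hxt : ∀ t < m, xt t ∈ F t)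
    (u : ℕ → EuclideanSpace ℝ (Fin n))
    (hu : ∀ t, u t = ∑ s ∈ Finset.range t, A s (xt s))
    (hmax : ∀ t < m, ∀ x ∈ F t, ⟪A t x, g (u t)⟫ ≤ ⟪A t (xt t), g (u t)⟫)
    (x' : ℕ → EuclideanSpace ℝ (Fin k))
    (hx' : ∀ t < m, x' t ∈ F t)
    (w : EuclideanSpace ℝ (Fin n)) :
    (∑ t ∈ Finset.range m, ⟪A t (x' t), g (u m)⟫) - ⟪g (u m), w⟫ + ψ w ≤
      (1 - α + κ) * ψ (u m) := by
  classical
  -- 0 ∈ K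
  have hK0 : (0 : EuclideanSpace ℝ (Fin n)) ∈ K := by
    have htend : Filter.Tendsto (fun j : ℕ => (1 / (j + 1) : ℝ) • c)
        Filter.atTop (nhds 0) := by
      have h0 : Filter.Tendsto (fun j : ℕ => (1 / (j + 1) : ℝ)) Filter.atTop (nhds 0) :=
        tendsto_one_div_add_atTop_nhds_zero_nat
      simpa using h0.smul_const c
    refine hKclosed.mem_of_tendsto htend ?_
    filter_upwards with j
    exact hKcone _ (by positivity) _ hc
  -- K closed under addition
  have hKadd : ∀ a ∈ K, ∀ b ∈ K, a + b ∈ K := by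
    intro a ha b hb
    have hmid := hKconvex ha hb (by norm_num : (0:ℝ) ≤ 1/2) (by norm_num : (0:ℝ) ≤ 1/2)
      (by norm_num)
    have := hKcone 2 (by norm_num) _ hmid
    have h2 : (2:ℝ) • ((1/2 : ℝ) • a + (1/2 : ℝ) • b) = a + b := by
      rw [smul_add, smul_smul, smul_smul]; norm_num
    rwa [h2] at this
  have hAK : ∀ s < m, A s (xt s) ∈ K := fun s hs => hA s hs _ (hxt s hs)
  have hsumK : ∀ S : Finset ℕ, (∀ s ∈ S, s < m) → (∑ s ∈ S, A s (xt s)) ∈ K := by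
    intro S
    induction S using Finset.induction with
    | empty => intro _; simpa using hK0
    | @insert a S ha ih =>
      intro hS
      rw [Finset.sum_insert ha]
      exact hKadd _ (hAK a (hS a (Finset.mem_insert_self a S))) _
        (ih fun s hs => hS s (Finset.mem_insert_of_mem hs))
  have huK : ∀ t ≤ m, u t ∈ K := by
    intro t ht
    rw [hu]
    exact hsumK _ fun s hs => lt_of_lt_of_le (Finset.mem_range.mp hs) ht
  have hdiffK : ∀ t t' : ℕ, t ≤ t' → t' ≤ m → u t' - u t ∈ K := by
    intro t t' htt' ht'
    have heq : u t' - u t = ∑ s ∈ Finset.Ico t t', A s (xt s) := by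
      rw [hu, hu, ← Finset.sum_range_add_sum_Ico _ htt', add_sub_cancel_left]
    rw [heq]
    exact hsumK _ fun s hs => lt_of_lt_of_le (Finset.mem_Ico.mp hs).2 ht'
  have hdual : ∀ t t' : ℕ, t ≤ t' → t' ≤ m → g (u t) - g (u t') ∈ dualCone K :=
    fun t t' htt' ht' => hantitone (u t') (huK t' ht') (u t) (huK t (htt'.trans ht'))
      (hdiffK t t' htt' ht')
  have hu1 : ∀ t, u (t + 1) - u t = A t (xt t) := by
    intro t
    rw [hu, hu, Finset.sum_range_succ, add_sub_cancel_left]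
  have hu0 : u 0 = 0 := by simp [hu]
  -- key per-term estimate
  have key : ∀ t ∈ Finset.range m,
      ⟪A t (x' t), g (u m)⟫ ≤
        (ψS (u (t + 1)) - ψS (u t)) + (⟪c, g (u t)⟫ - ⟪c, g (u (t + 1))⟫) := by
    intro t htm'
    have htm : t < m := Finset.mem_range.mp htm'
    have h1 : ⟪A t (x' t), g (u m)⟫ ≤ ⟪A t (x' t), g (u t)⟫ := by
      have hd := hdual t m htm.le le_rfl _ (hA t htm _ (hx' t htm))
      rw [inner_sub_left] at hd
      linarith [real_inner_comm (A t (x' t)) (g (u m)), real_inner_comm (A t (x' t)) (g (u t))]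
    have h2 : ⟪A t (x' t), g (u t)⟫ ≤ ⟪A t (xt t), g (u t)⟫ := hmax t htm _ (hx' t htm)
    have h3 : ⟪g (u (t + 1)), A t (xt t)⟫ ≤ ψS (u (t + 1)) - ψS (u t) := by
      have hgi := concave_grad_ineq hψS (hg (u (t + 1))) (u t)
      have he : u t - u (t + 1) = -(A t (xt t)) := by
        rw [← hu1 t]; abel
      rw [he, inner_neg_right] at hgi
      linarith
    have h4 : ⟪g (u t) - g (u (t + 1)), A t (xt t)⟫ ≤ ⟪g (u t) - g (u (t + 1)), c⟫ := by
      have hd := hdual t (t + 1) (Nat.le_succ t) htm _ (hcb t htm _ (hxt t htm))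
      rw [inner_sub_right] at hd
      linarith
    have hsplit : ⟪A t (xt t), g (u t)⟫ =
        ⟪g (u (t + 1)), A t (xt t)⟫ + ⟪g (u t) - g (u (t + 1)), A t (xt t)⟫ := by
      rw [inner_sub_left, real_inner_comm (A t (xt t)) (g (u t))]; ring
    have hc' : ⟪g (u t) - g (u (t + 1)), c⟫ = ⟪c, g (u t)⟫ - ⟪c, g (u (t + 1))⟫ := by
      rw [inner_sub_left, real_inner_comm (g (u t)) c, real_inner_comm (g (u (t + 1))) c]
    linarith
  have hsum : (∑ t ∈ Finset.range m, ⟪A t (x' t), g (u m)⟫) ≤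
      (ψS (u m) - ψS (u 0)) + (⟪c, g (u 0)⟫ - ⟪c, g (u m)⟫) := by
    calc (∑ t ∈ Finset.range m, ⟪A t (x' t), g (u m)⟫)
        ≤ ∑ t ∈ Finset.range m,
            ((ψS (u (t + 1)) - ψS (u t)) + (⟪c, g (u t)⟫ - ⟪c, g (u (t + 1))⟫)) :=
          Finset.sum_le_sum key
      _ = (∑ t ∈ Finset.range m, (ψS (u (t + 1)) - ψS (u t))) +
            ∑ t ∈ Finset.range m, (⟪c, g (u t)⟫ - ⟪c, g (u (t + 1))⟫) :=
          Finset.sum_add_distrib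
      _ = (ψS (u m) - ψS (u 0)) + (⟪c, g (u 0)⟫ - ⟪c, g (u m)⟫) := by
          rw [Finset.sum_range_sub (fun t => ψS (u t)),
            Finset.sum_range_sub' (fun t => ⟪c, g (u t)⟫)]
  have hκ' : ⟪c, g (u 0)⟫ - ⟪c, g (u m)⟫ ≤ κ * ψ (u m) := by
    have h := hκ (u m) (huK m le_rfl)
    rw [inner_sub_right] at h
    rw [hu0]
    exact h
  have hα' := hα (u m) (huK m le_rfl) w
  have hψS0' : ψS (u 0) = 0 := by rw [hu0, hψS0]
  nlinarith [hsum, hκ', hα']
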